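/- arXiv:1109.6167 — 2 statements merged into one kernel-verified Lean document; each statement's English description precedes it below -/
import Mathlib

section
/- Let (Ω, 𝒜, μ) be a measure space with μ a positive finite measure, let E be a separable real Banach space, let F : Ω → Set E be a set-valued map, and let a ∈ E. Suppose that every Bochner integrable function f : Ω → E satisfying f(ω) ∈ F(ω) for μ-almost every ω has Bochner integral ∫_Ω f dμ = a. Then any two Bochner integrable functions x₁, x₂ : Ω → E with x₁(ω) ∈ F(ω) μ-a.e. and x₂(ω) ∈ F(ω) μ-a.e. satisfy x₁ = x₂ μ-almost everywhere. -/
open MeasureTheory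

/-- If every Bochner integrable selection of `F` has integral `a`, then any two
such selections agree almost everywhere. -/
theorem ae_eq_of_aumann_integral_singleton
    {Ω : Type*} [MeasurableSpace Ω] {μ : Measure Ω} [IsFiniteMeasure μ]
    {E : Type*} [NormedAddCommGroup E] [NormedSpace ℝ E] [CompleteSpace E]
    [TopologicalSpace.SeparableSpace E]
    (F : Ω → Set E) (a : E)
    (hF : ∀ f : Ω → E, Integrable f μ → (∀ᵐ ω ∂μ, f ω ∈ F ω) → ∫ ω, f ω ∂μ = a)
    (x₁ x₂ : Ω → E) (hx₁ : Integrable x₁ μ) (hx₂ : Integrable x₂ μ)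
    (hx₁F : ∀ᵐ ω ∂μ, x₁ ω ∈ F ω) (hx₂F : ∀ᵐ ω ∂μ, x₂ ω ∈ F ω) :
    x₁ =ᵐ[μ] x₂ := by
  refine Integrable.ae_eq_of_forall_setIntegral_eq x₁ x₂ hx₁ hx₂ ?_
  intro s hs _
  classical
  have hint : Integrable (s.piecewise x₁ x₂) μ :=
    Integrable.piecewise hs hx₁.integrableOn hx₂.integrableOn
  have hmem : ∀ᵐ ω ∂μ, s.piecewise x₁ x₂ ω ∈ F ω := by
    filter_upwards [hx₁F, hx₂F] with ω h1 h2
    by_cases hω : ω ∈ s <;> simp [Set.piecewise, hω, h1, h2]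
  have h1 : ∫ ω, s.piecewise x₁ x₂ ω ∂μ = a := hF _ hint hmem
  have h2 : ∫ ω, x₂ ω ∂μ = a := hF _ hx₂ hx₂F
  have hsplit : ∫ ω, s.piecewise x₁ x₂ ω ∂μ
      = ∫ ω in s, x₁ ω ∂μ + ∫ ω in sᶜ, x₂ ω ∂μ := by
    rw [← integral_add_compl hs hint]
    congr 1
    · exact setIntegral_congr_fun hs fun ω hω => Set.piecewise_eq_of_mem _ _ _ hω
    · exact setIntegral_congr_fun hs.compl fun ω hω => Set.piecewise_eq_of_notMem _ _ _ hω
  have hsplit2 : ∫ ω, x₂ ω ∂μ = ∫ ω in s, x₂ ω ∂μ + ∫ ω in sᶜ, x₂ ω ∂μ :=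
    (integral_add_compl hs hx₂).symm
  have := hsplit.symm.trans (h1.trans (h2.symm.trans hsplit2))
  exact add_right_cancel this
end

section
/- Let (Ω, 𝒜, μ) be a measure space with μ a positive finite measure, let E be a separable real Banach space, and let F : Ω → Set E be a set-valued map admitting at least one Bochner integrable selection. Suppose that every Bochner integrable selection of F has Bochner integral equal to 0. Then there exists a Bochner integrable function x : Ω → E with ∫_Ω x dμ = 0 such that every Bochner integrable selection of F is μ-almost everywhere equal to x. -/
open MeasureTheory

/-- If `F` has an integrable selection and every integrable selection has Bochner
integral `0`, then there is an integrable `x` with `∫ x dμ = 0` such that every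
integrable selection of `F` equals `x` almost everywhere. -/
theorem aumann_integral_zero_implies_ae_singleton
    {Ω : Type*} [MeasurableSpace Ω] {μ : Measure Ω} [IsFiniteMeasure μ]
    {E : Type*} [NormedAddCommGroup E] [NormedSpace ℝ E] [CompleteSpace E]
    [TopologicalSpace.SeparableSpace E]
    (F : Ω → Set E)
    (hsel : ∃ f : Ω → E, Integrable f μ ∧ ∀ᵐ ω ∂μ, f ω ∈ F ω)
    (hF : ∀ f : Ω → E, Integrable f μ → (∀ᵐ ω ∂μ, f ω ∈ F ω) →
      ∫ ω, f ω ∂μ = 0) :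
    ∃ x : Ω → E, Integrable x μ ∧ ∫ ω, x ω ∂μ = 0 ∧
      ∀ f : Ω → E, Integrable f μ → (∀ᵐ ω ∂μ, f ω ∈ F ω) → f =ᵐ[μ] x := by
  classical
  obtain ⟨g, hg, hgF⟩ := hsel
  refine ⟨g, hg, hF g hg hgF, ?_⟩
  intro f hf hfF
  refine Integrable.ae_eq_of_forall_setIntegral_eq f g hf hg ?_
  intro s hs _
  -- consider the piecewise selection
  have hpw : Integrable (s.piecewise f g) μ :=
    Integrable.piecewise hs hf.integrableOn hg.integrableOn
  have hpwF : ∀ᵐ ω ∂μ, s.piecewise f g ω ∈ F ω := by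
    filter_upwards [hfF, hgF] with ω h1 h2
    by_cases hω : ω ∈ s <;> simp [Set.piecewise, hω, h1, h2]
  have h1 : ∫ ω, s.piecewise f g ω ∂μ = 0 := hF _ hpw hpwF
  rw [integral_piecewise hs hf.integrableOn hg.integrableOn] at h1
  have h2 : ∫ ω in s, g ω ∂μ + ∫ ω in sᶜ, g ω ∂μ = 0 := by
    rw [integral_add_compl hs hg]; exact hF g hg hgF
  have := congrArg (· - ∫ ω in sᶜ, g ω ∂μ) (h1.trans h2.symm)
  simpa using this
end
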